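/- Fix an integer m ≥ 1. For a sequence a of positive reals, the following are equivalent: (1) for every sequence x of positive reals in υC_∞^G(Δ_G^m) (i.e. x ∈ C_∞^G(Δ_G^m) with x_1 = ⋯ = x_m = 1), the series ∑_{k=1}^∞ |log a_k| · |log x_k| converges; (2) the series ∑_{k=1}^∞ k^m · |log a_k| converges. (This identifies the α-dual: [υC_∞^G(Δ_G^m)]^α = { a : ∑_G e^{k^m} ⊙ |a_k|_G < ∞ }.) -/
import Mathlib

/-- Classical `m`-th order forward difference
`Δ^m y_k = ∑_{v=0}^m (−1)^v C(m,v) y_{k+v}`. -/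
noncomputable def fdiff (m : ℕ) (y : ℕ → ℝ) (k : ℕ) : ℝ :=
  ∑ v ∈ Finset.range (m + 1), (-1 : ℝ) ^ v * (m.choose v : ℝ) * y (k + v)

/-- The Cesàro mean `(1/n) ∑_{k=1}^n Δ^m (log x)_k`. -/
noncomputable def cesaro (m : ℕ) (x : ℕ → ℝ) (n : ℕ) : ℝ :=
  (1 / (n : ℝ)) * ∑ k ∈ Finset.Icc 1 n, fdiff m (fun j => Real.log (x j)) k

/-- Membership in the bigeometric Cesàro difference space `C_p^G(Δ_G^m)`. -/
def memCpG (m : ℕ) (p : ℝ) (x : ℕ → ℝ) : Prop :=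
  (∀ k, 1 ≤ k → 0 < x k) ∧ Summable (fun n : ℕ => |cesaro m x n| ^ p)

/-- Membership in the bigeometric Cesàro difference space `C_∞^G(Δ_G^m)`. -/
def memCinfG (m : ℕ) (x : ℕ → ℝ) : Prop :=
  (∀ k, 1 ≤ k → 0 < x k) ∧ ∃ C : ℝ, ∀ n : ℕ, |cesaro m x n| ≤ C

lemma fdiff_zero (y : ℕ → ℝ) (k : ℕ) : fdiff 0 y k = y k := by
  simp [fdiff]

lemma fdiff_congr {m k : ℕ} {y z : ℕ → ℝ} (h : ∀ j, k ≤ j → j ≤ k + m → y j = z j) :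
    fdiff m y k = fdiff m z k := by
  unfold fdiff
  refine Finset.sum_congr rfl fun v hv => ?_
  rw [h (k + v) (by omega) (by simp at hv; omega)]

lemma fdiff_neg (m : ℕ) (y : ℕ → ℝ) (k : ℕ) :
    fdiff m (fun j => -y j) k = -fdiff m y k := by
  simp [fdiff, mul_neg, Finset.sum_neg_distrib]

lemma fdiff_const_mul (m : ℕ) (c : ℝ) (y : ℕ → ℝ) (k : ℕ) :
    fdiff m (fun j => c * y j) k = c * fdiff m y k := by
  rw [fdiff, fdiff, Finset.mul_sum]
  exact Finset.sum_congr rfl fun v _ => by ring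

lemma fdiff_sub (m : ℕ) (y z : ℕ → ℝ) (k : ℕ) :
    fdiff m (fun j => y j - z j) k = fdiff m y k - fdiff m z k := by
  simp [fdiff, mul_sub, Finset.sum_sub_distrib]

lemma fdiff_shift (m : ℕ) (y : ℕ → ℝ) (k : ℕ) :
    fdiff m (fun j => y (j + 1)) k = fdiff m y (k + 1) := by
  unfold fdiff
  refine Finset.sum_congr rfl fun v _ => ?_
  have h : k + v + 1 = k + 1 + v := by omega
  beta_reduce
  rw [h]

lemma fdiff_succ (m : ℕ) (y : ℕ → ℝ) (k : ℕ) :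
    fdiff (m + 1) y k = fdiff m y k - fdiff m y (k + 1) := by
  have key : fdiff (m+1) y k
      = (∑ i ∈ Finset.range (m+1),
          ((-1:ℝ)^(i+1) * (m.choose (i+1) : ℝ) * y (k + (i+1))
            + (-((-1:ℝ)^i * (m.choose i : ℝ) * y ((k+1) + i))))) + y k := by
    rw [fdiff, Finset.sum_range_succ']
    congr 1
    · refine Finset.sum_congr rfl fun i _ => ?_
      have h1 : (k+1) + i = k + (i+1) := by omega
      rw [Nat.choose_succ_succ, h1]
      push_cast
      ring
    · simp
  rw [key, Finset.sum_add_distrib]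
  have h2 : ∑ i ∈ Finset.range (m+1), ((-1:ℝ)^(i+1) * (m.choose (i+1) : ℝ) * y (k + (i+1)))
      = fdiff m y k - y k := by
    have h3 : ∑ i ∈ Finset.range (m+1), ((-1:ℝ)^(i+1) * (m.choose (i+1) : ℝ) * y (k + (i+1)))
        = ∑ i ∈ Finset.range m, ((-1:ℝ)^(i+1) * (m.choose (i+1) : ℝ) * y (k + (i+1))) := by
      rw [Finset.sum_range_succ, Nat.choose_succ_self]
      simp
    rw [h3, fdiff, Finset.sum_range_succ']
    simp
  have h4 : ∑ i ∈ Finset.range (m+1), (-((-1:ℝ)^i * (m.choose i : ℝ) * y ((k+1) + i)))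
      = -fdiff m y (k+1) := by
    rw [fdiff, Finset.sum_neg_distrib]
  rw [h2, h4]
  ring

lemma fdiff_succ' (m : ℕ) (y : ℕ → ℝ) (k : ℕ) :
    fdiff (m + 1) y k = fdiff m (fun j => y j - y (j + 1)) k := by
  rw [fdiff_sub, fdiff_shift, fdiff_succ]

lemma sum_fdiff_succ (m n : ℕ) (y : ℕ → ℝ) :
    ∑ k ∈ Finset.Icc 1 n, fdiff (m + 1) y k = fdiff m y 1 - fdiff m y (n + 1) := by
  induction n with
  | zero => simp
  | succ n ih =>
    rw [Finset.sum_Icc_succ_top (by omega), ih, fdiff_succ]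
    ring

lemma pointwise_of_sum_bound (r j : ℕ) (y : ℕ → ℝ) (D : ℝ)
    (hsum : ∀ n : ℕ, 1 ≤ n → |∑ k ∈ Finset.Icc 1 n, fdiff (r + 1) y k| ≤ D * (n : ℝ) ^ j) :
    ∀ n : ℕ, 1 ≤ n → |fdiff r y n| ≤ (|fdiff r y 1| + |D|) * (n : ℝ) ^ j := by
  intro n hn
  obtain ⟨p, rfl⟩ : ∃ p, n = p + 1 := ⟨n - 1, by omega⟩
  have h1 : fdiff r y (p + 1) = fdiff r y 1 - ∑ k ∈ Finset.Icc 1 p, fdiff (r + 1) y k := by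
    rw [sum_fdiff_succ]; ring
  have hone : (1 : ℝ) ≤ ((p : ℝ) + 1) ^ j := by
    calc (1 : ℝ) = 1 ^ j := (one_pow j).symm
      _ ≤ ((p : ℝ) + 1) ^ j :=
        pow_le_pow_left₀ zero_le_one (by linarith [Nat.cast_nonneg (α := ℝ) p]) j
  rcases Nat.eq_zero_or_pos p with rfl | hp
  · norm_num

  · have h2 := hsum p hp
    have h3 : |fdiff r y (p + 1)| ≤ |fdiff r y 1| + D * (p : ℝ) ^ j := by
      rw [h1]
      calc |fdiff r y 1 - ∑ k ∈ Finset.Icc 1 p, fdiff (r + 1) y k|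
          ≤ |fdiff r y 1| + |∑ k ∈ Finset.Icc 1 p, fdiff (r + 1) y k| := abs_sub _ _
        _ ≤ |fdiff r y 1| + D * (p : ℝ) ^ j := by linarith
    have h4 : D * (p : ℝ) ^ j ≤ |D| * ((p : ℝ) + 1) ^ j := by
      have : (p : ℝ) ^ j ≤ ((p : ℝ) + 1) ^ j :=
        pow_le_pow_left₀ (Nat.cast_nonneg p) (by linarith) j
      have hD := le_abs_self D
      nlinarith [abs_nonneg D, pow_nonneg (Nat.cast_nonneg (α := ℝ) p) j]
    have h5 : |fdiff r y 1| ≤ |fdiff r y 1| * ((p : ℝ) + 1) ^ j := by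
      nlinarith [abs_nonneg (fdiff r y 1)]
    push_cast
    nlinarith

lemma sum_bound_step (r j : ℕ) (y : ℕ → ℝ) (E : ℝ)
    (h : ∀ n : ℕ, 1 ≤ n → |fdiff r y n| ≤ E * (n : ℝ) ^ j) :
    ∀ n : ℕ, 1 ≤ n → |∑ k ∈ Finset.Icc 1 n, fdiff r y k| ≤ E * (n : ℝ) ^ (j + 1) := by
  intro n hn
  have hE : 0 ≤ E := by
    have h1 := h 1 le_rfl
    have h2 := abs_nonneg (fdiff r y 1)
    norm_num at h1
    linarith
  calc |∑ k ∈ Finset.Icc 1 n, fdiff r y k| ≤ ∑ k ∈ Finset.Icc 1 n, |fdiff r y k| :=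
        Finset.abs_sum_le_sum_abs _ _
    _ ≤ ∑ _k ∈ Finset.Icc 1 n, E * (n : ℝ) ^ j := by
        refine Finset.sum_le_sum fun k hk => ?_
        simp only [Finset.mem_Icc] at hk
        calc |fdiff r y k| ≤ E * (k : ℝ) ^ j := h k hk.1
          _ ≤ E * (n : ℝ) ^ j := by
              have : ((k : ℝ)) ^ j ≤ ((n : ℝ)) ^ j :=
                pow_le_pow_left₀ (Nat.cast_nonneg k) (by exact_mod_cast hk.2) j
              nlinarith
    _ = (n : ℝ) * (E * (n : ℝ) ^ j) := by
        rw [Finset.sum_const, Nat.card_Icc]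
        simp [nsmul_eq_mul]
    _ = E * (n : ℝ) ^ (j + 1) := by ring

lemma key_induction (m : ℕ) (y : ℕ → ℝ) (C : ℝ)
    (h : ∀ n : ℕ, 1 ≤ n → |∑ k ∈ Finset.Icc 1 n, fdiff m y k| ≤ C * (n : ℝ) ^ 1) :
    ∀ i, i ≤ m → ∃ D : ℝ, ∀ n : ℕ, 1 ≤ n →
      |∑ k ∈ Finset.Icc 1 n, fdiff (m - i) y k| ≤ D * (n : ℝ) ^ (i + 1) := by
  intro i
  induction i with
  | zero => exact fun _ => ⟨C, by simpa using h⟩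
  | succ i ih =>
    intro hi
    obtain ⟨D, hsum⟩ := ih (by omega)
    have hr : m - i = (m - (i + 1)) + 1 := by omega
    rw [hr] at hsum
    have hp := pointwise_of_sum_bound (m - (i + 1)) (i + 1) y D hsum
    exact ⟨_, sum_bound_step _ _ y _ hp⟩

lemma pointwise_growth (m : ℕ) (hm : 1 ≤ m) (y : ℕ → ℝ) (C : ℝ)
    (h : ∀ n : ℕ, 1 ≤ n → |∑ k ∈ Finset.Icc 1 n, fdiff m y k| ≤ C * (n : ℝ) ^ 1) :
    ∃ D : ℝ, ∀ n : ℕ, 1 ≤ n → |y n| ≤ D * (n : ℝ) ^ m := by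
  obtain ⟨D, hsum⟩ := key_induction m y C h (m - 1) (by omega)
  have h1 : m - (m - 1) = 0 + 1 := by omega
  have h2 : m - 1 + 1 = m := by omega
  rw [h1, h2] at hsum
  have hp := pointwise_of_sum_bound 0 m y D hsum
  exact ⟨_, fun n hn => by simpa [fdiff_zero] using hp n hn⟩

lemma fdiff_binom (m : ℕ) :
    ∀ k : ℕ, 1 ≤ k → fdiff m (fun j => (((j - 1).choose m : ℕ) : ℝ)) k = (-1 : ℝ) ^ m := by
  induction m with
  | zero => intro k hk; simp [fdiff_zero]
  | succ m ih =>
    intro k hk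
    rw [fdiff_succ']
    have hcongr : fdiff m (fun j => (((j - 1).choose (m + 1) : ℕ) : ℝ)
          - (((j + 1 - 1).choose (m + 1) : ℕ) : ℝ)) k
        = fdiff m (fun j => -(((j - 1).choose m : ℕ) : ℝ)) k := by
      apply fdiff_congr
      intro j hj _
      have hj1 : 1 ≤ j := le_trans hk hj
      have hrw : j = (j - 1) + 1 := by omega
      have h2 : j + 1 - 1 = (j - 1) + 1 := by omega
      rw [h2, Nat.choose_succ_succ]
      push_cast
      ring
    rw [hcongr, fdiff_neg, ih k hk]
    ring

lemma nat_ineq (m K : ℕ) (h : 2 * m + 1 ≤ K) :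
    (K + 1) ^ m ≤ 2 ^ m * (m.factorial * K.choose m) := by
  have h1 : (K + 1 - m) ^ m ≤ K.descFactorial m := Nat.pow_sub_le_descFactorial K m
  have h2 : K.descFactorial m = m.factorial * K.choose m :=
    Nat.descFactorial_eq_factorial_mul_choose K m
  have h3 : K + 1 ≤ 2 * (K + 1 - m) := by omega
  calc (K + 1) ^ m ≤ (2 * (K + 1 - m)) ^ m := Nat.pow_le_pow_left h3 m
    _ = 2 ^ m * (K + 1 - m) ^ m := mul_pow 2 _ m
    _ ≤ 2 ^ m * (m.factorial * K.choose m) := by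
        rw [← h2]; exact Nat.mul_le_mul_left _ h1

/-- α-dual of `υC_∞^G(Δ_G^m)`:
a positive sequence `a` satisfies `∑_G |a_k ⊙ x_k|_G < ∞` for every
`x ∈ υC_∞^G(Δ_G^m)` if and only if `∑_G e^{k^m} ⊙ |a_k|_G < ∞`,
i.e. `∑_{k≥1} |log a_k|·|log x_k| < ∞` for all such `x` iff
`∑_{k≥1} k^m·|log a_k| < ∞`. -/
theorem upsilonCinfG_alpha_dual (m : ℕ) (hm : 1 ≤ m) (a : ℕ → ℝ)
    (ha : ∀ k, 1 ≤ k → 0 < a k) :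
    (∀ x : ℕ → ℝ, memCinfG m x → (∀ i, 1 ≤ i → i ≤ m → x i = 1) →
        Summable (fun k : ℕ => |Real.log (a (k + 1))| * |Real.log (x (k + 1))|)) ↔
      Summable (fun k : ℕ => ((k + 1 : ℕ) : ℝ) ^ m * |Real.log (a (k + 1))|) := by
  constructor
  · -- forward: test against the binomial sequence
    intro h
    set c : ℝ := (m.factorial : ℝ) with hc
    have hc0 : (0 : ℝ) < c := by rw [hc]; exact_mod_cast m.factorial_pos
    set x : ℕ → ℝ := fun k => Real.exp (c * (((k - 1).choose m : ℕ) : ℝ)) with hx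
    have hlog : ∀ j, Real.log (x j) = c * (((j - 1).choose m : ℕ) : ℝ) := fun j =>
      Real.log_exp _
    have hfd : ∀ k, 1 ≤ k → fdiff m (fun j => Real.log (x j)) k = c * (-1 : ℝ) ^ m := by
      intro k hk
      have hfun : (fun j => Real.log (x j)) = fun j => c * (((j - 1).choose m : ℕ) : ℝ) :=
        funext fun j => hlog j
      rw [hfun, fdiff_const_mul, fdiff_binom m k hk]
    have hces : ∀ n : ℕ, |cesaro m x n| ≤ c := by
      intro n
      rcases Nat.eq_zero_or_pos n with rfl | hn
      · simp [cesaro]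
        linarith
      · have hsum : ∑ k ∈ Finset.Icc 1 n, fdiff m (fun j => Real.log (x j)) k
            = (n : ℝ) * (c * (-1 : ℝ) ^ m) := by
          rw [Finset.sum_congr rfl fun k hk => hfd k (Finset.mem_Icc.mp hk).1]
          rw [Finset.sum_const, Nat.card_Icc]
          simp [nsmul_eq_mul]
        have hn0 : ((n : ℝ)) ≠ 0 := by positivity
        rw [cesaro, hsum]
        rw [show (1 / (n : ℝ)) * ((n : ℝ) * (c * (-1 : ℝ) ^ m)) = c * (-1 : ℝ) ^ m by
          field_simp]
        rw [abs_mul, abs_pow]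
        simp [abs_of_pos hc0]
    have hmem : memCinfG m x := ⟨fun k _ => Real.exp_pos _, c, hces⟩
    have hx1 : ∀ i, 1 ≤ i → i ≤ m → x i = 1 := by
      intro i h1 h2
      have : (i - 1).choose m = 0 := Nat.choose_eq_zero_of_lt (by omega)
      simp [hx, this]
    have hsum := h x hmem hx1
    apply (summable_nat_add_iff (2 * m + 1)).1
    have hsum2 : Summable (fun n : ℕ =>
        (2 : ℝ) ^ m * (|Real.log (a (n + (2 * m + 1) + 1))|
          * |Real.log (x (n + (2 * m + 1) + 1))|)) :=
      ((summable_nat_add_iff (2 * m + 1)).2 hsum).mul_left _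
    refine Summable.of_nonneg_of_le (fun n => by positivity) (fun n => ?_) hsum2
    set K := n + (2 * m + 1) with hK
    have hKm : 2 * m + 1 ≤ K := by omega
    have hlx : |Real.log (x (K + 1))| = c * ((K.choose m : ℕ) : ℝ) := by
      rw [hlog]
      have : K + 1 - 1 = K := by omega
      rw [this, abs_of_nonneg (by positivity)]
    have hnat := nat_ineq m K hKm
    have hreal : ((K + 1 : ℕ) : ℝ) ^ m ≤ 2 ^ m * (c * ((K.choose m : ℕ) : ℝ)) := by
      rw [hc]
      exact_mod_cast hnat
    rw [hlx]
    have hla : (0 : ℝ) ≤ |Real.log (a (K + 1))| := abs_nonneg _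
    nlinarith [mul_le_mul_of_nonneg_right hreal hla]
  · -- backward: comparison using the growth bound
    intro hS x hx hx1
    obtain ⟨hpos, C, hC⟩ := hx
    set y : ℕ → ℝ := fun j => Real.log (x j) with hy
    have hbound : ∀ n : ℕ, 1 ≤ n →
        |∑ k ∈ Finset.Icc 1 n, fdiff m y k| ≤ C * (n : ℝ) ^ 1 := by
      intro n hn
      have hn0 : (0 : ℝ) < (n : ℝ) := by exact_mod_cast hn
      have h1 := hC n
      rw [cesaro, abs_mul, abs_of_pos (by positivity : (0:ℝ) < 1 / (n : ℝ))] at h1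
      rw [pow_one]
      rw [one_div, inv_mul_le_iff₀ hn0] at h1
      linarith [h1]
    obtain ⟨D, hD⟩ := pointwise_growth m hm y C hbound
    refine Summable.of_nonneg_of_le (fun k => by positivity) (fun k => ?_) (hS.mul_left D)
    have hk := hD (k + 1) (by omega)
    have hla : (0 : ℝ) ≤ |Real.log (a (k + 1))| := abs_nonneg _
    calc |Real.log (a (k + 1))| * |Real.log (x (k + 1))|
        ≤ |Real.log (a (k + 1))| * (D * ((k + 1 : ℕ) : ℝ) ^ m) :=
          mul_le_mul_of_nonneg_left hk hla
      _ = D * (((k + 1 : ℕ) : ℝ) ^ m * |Real.log (a (k + 1))|) := by ring
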